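/- Let φ = ⋁_{i=1}^m ⋀_{j=1}^{n_i} l^i_j be a classical propositional formula in disjunctive normal form (each l^i_j a literal). Then the PIT ζ_φ = ⊙_{i=1}^m (Pr(⋀_{j=1}^{n_i} l^i_j) ≤ 0̄) is FP-satisfiable if and only if φ is not CPL-valid. -/

import Mathlib

open scoped Classical

/-- Classical propositional formulas (the language `L_CPL`), built from
propositional variables (indexed by `ℕ`) using ¬, ∧, ∨. -/
inductive CPL where
  | var : ℕ → CPL
  | neg : CPL → CPL
  | and : CPL → CPL → CPL
  | or : CPL → CPL → CPL
deriving DecidableEq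

namespace CPL

/-- The set of propositional variables occurring in a formula. -/
def vars : CPL → Finset ℕ
  | var p => {p}
  | neg φ => vars φ
  | and φ χ => vars φ ∪ vars χ
  | or φ χ => vars φ ∪ vars χ

/-- Classical evaluation of a formula under a Boolean valuation. -/
def eval (v : ℕ → Bool) : CPL → Bool
  | var p => v p
  | neg φ => !eval v φ
  | and φ χ => eval v φ && eval v χ
  | or φ χ => eval v φ || eval v χ

/-- Evaluation of a formula at a state given as a set of variables:
the variables in `X` are true, all others false. -/
def evalSet (X : Finset ℕ) (φ : CPL) : Bool := eval (fun p => decide (p ∈ X)) φ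

/-- CPL-satisfiability. -/
def Satisfiable (φ : CPL) : Prop := ∃ v, eval v φ = true

/-- CPL-validity. -/
def Valid (φ : CPL) : Prop := ∀ v, eval v φ = true

/-- Classical entailment `φ ⊨_CPL χ`. -/
def Entails (φ χ : CPL) : Prop := ∀ v, eval v φ = true → eval v χ = true

/-- A literal: a variable or a negated variable. -/
def IsLiteral (φ : CPL) : Prop := (∃ p, φ = var p) ∨ ∃ p, φ = neg (var p)

/-- An `L_CPL`-term: a conjunction of literals. -/
inductive IsTerm : CPL → Prop
  | lit {φ} : IsLiteral φ → IsTerm φ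
  | conj {φ χ} : IsTerm φ → IsTerm χ → IsTerm (and φ χ)

/-- A conjunction of propositional variables. -/
inductive IsConjVars : CPL → Prop
  | var (p : ℕ) : IsConjVars (var p)
  | conj {φ χ} : IsConjVars φ → IsConjVars χ → IsConjVars (and φ χ)

/-- A disjunction of propositional variables. -/
inductive IsDisjVars : CPL → Prop
  | var (p : ℕ) : IsDisjVars (var p)
  | disj {φ χ} : IsDisjVars φ → IsDisjVars χ → IsDisjVars (or φ χ)

/-- Variables occurring as positive literals (in a term). -/
def posVars : CPL → Finset ℕ
  | var p => {p}
  | neg _ => ∅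
  | and φ χ => posVars φ ∪ posVars χ
  | or _ _ => ∅

/-- Variables occurring as negated literals (in a term). -/
def negVars : CPL → Finset ℕ
  | var _ => ∅
  | neg (var p) => {p}
  | neg _ => ∅
  | and φ χ => negVars φ ∪ negVars χ
  | or _ _ => ∅

/-- The literals occurring in a term. -/
def lits (φ : CPL) : Finset CPL :=
  (posVars φ).image var ∪ (negVars φ).image (fun p => neg (var p))

end CPL

/-- A state (possible world) over a finite set `V` of variables: a subset of `V`. -/
abbrev World (V : Finset ℕ) := {X : Finset ℕ // X ⊆ V}

/-- A probabilistic model for `V`: a finitely additive probability measure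
`μ : 2^(2^V) → [0,1]`. -/
structure ProbModel (V : Finset ℕ) where
  μ : Set (World V) → ℝ
  nonneg : ∀ A, 0 ≤ μ A
  le_one : ∀ A, μ A ≤ 1
  m_univ : μ Set.univ = 1
  m_empty : μ ∅ = 0
  m_add : ∀ A B : Set (World V), Disjoint A B → μ (A ∪ B) = μ A + μ B

/-- The truth set `‖φ‖_M` of a classical formula in a probabilistic model for `V`. -/
def truthSet (V : Finset ℕ) (φ : CPL) : Set (World V) :=
  {w | CPL.evalSet w.1 φ = true}

/-- Comparison symbols ◇ ∈ {≤, <, >, ≥}. -/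
inductive Ineq where
  | le | lt | gt | ge
deriving DecidableEq

/-- The relation denoted by a comparison symbol. -/
def Ineq.holds : Ineq → ℝ → ℝ → Prop
  | le, x, c => x ≤ c
  | lt, x, c => x < c
  | gt, x, c => x > c
  | ge, x, c => x ≥ c

/-- Formulas of the probabilistic language `L^Q_Pr`, built from probabilistic atoms
`Pr(φ)` and `Pr(φ)◇c̄` using ¬, △, ⊙, ⊕, →. -/
inductive FP where
  | prob : CPL → FP
  | probIneq : CPL → Ineq → ℚ → FP
  | neg : FP → FP
  | delta : FP → FP
  | conj : FP → FP → FP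
  | disj : FP → FP → FP
  | impl : FP → FP → FP
deriving DecidableEq

namespace FP

/-- Well-formedness: all rational constants lie in `[0,1] ∩ ℚ`. -/
def WF : FP → Prop
  | prob _ => True
  | probIneq _ _ c => 0 ≤ c ∧ c ≤ 1
  | neg α => WF α
  | delta α => WF α
  | conj α β => WF α ∧ WF β
  | disj α β => WF α ∧ WF β
  | impl α β => WF α ∧ WF β

/-- The variables of an `L^Q_Pr`-formula. -/
def vars : FP → Finset ℕ
  | prob φ => φ.vars
  | probIneq φ _ _ => φ.vars
  | neg α => vars α
  | delta α => vars α
  | conj α β => vars α ∪ vars β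
  | disj α β => vars α ∪ vars β
  | impl α β => vars α ∪ vars β

/-- The events `E(α)`: the classical formulas occurring in probabilistic atoms of `α`. -/
def events : FP → Finset CPL
  | prob φ => {φ}
  | probIneq φ _ _ => {φ}
  | neg α => events α
  | delta α => events α
  | conj α β => events α ∪ events β
  | disj α β => events α ∪ events β
  | impl α β => events α ∪ events β

/-- The FP-interpretation `I_M` induced by a probabilistic model `M`. -/
noncomputable def interp {V : Finset ℕ} (M : ProbModel V) : FP → ℝ
  | prob φ => M.μ (truthSet V φ)
  | probIneq φ d c => if d.holds (M.μ (truthSet V φ)) (c : ℝ) then 1 else 0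
  | neg α => 1 - interp M α
  | delta α => if interp M α = 1 then 1 else 0
  | conj α β => max 0 (interp M α + interp M β - 1)
  | disj α β => min 1 (interp M α + interp M β)
  | impl α β => min 1 (1 - interp M α + interp M β)

/-- `α` is FP-satisfiable: `I_M(α) = 1` in some probabilistic model for `Var(α)`. -/
def Satisfiable (α : FP) : Prop := ∃ M : ProbModel α.vars, interp M α = 1

/-- `α` is FP-valid: `I_M(α) = 1` in every probabilistic model for `Var(α)`. -/
def Valid (α : FP) : Prop := ∀ M : ProbModel α.vars, interp M α = 1

/-- `α ⊨_FP β`: `I_M(β) = 1` in every probabilistic model for the variables of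
`{α, β}` with `I_M(α) = 1`. -/
def Entails1 (α β : FP) : Prop :=
  ∀ M : ProbModel (α.vars ∪ β.vars), interp M α = 1 → interp M β = 1

/-- The variables of a finite set of `L^Q_Pr`-formulas. -/
def varsSet (Γ : Finset FP) : Finset ℕ := Γ.sup vars

/-- A finite set `Γ` is FP-satisfiable (`Γ ⊭_FP ⊥`): some probabilistic model for
the variables of `Γ` makes every member of `Γ` equal to `1`. -/
def SetSatisfiable (Γ : Finset FP) : Prop :=
  ∃ M : ProbModel (varsSet Γ), ∀ γ ∈ Γ, interp M γ = 1

/-- `Γ ⊨_FP δ`: every probabilistic model for the variables of `Γ ∪ {δ}` satisfying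
all of `Γ` satisfies `δ`. -/
def EntailsFin (Γ : Finset FP) (δ : FP) : Prop :=
  ∀ M : ProbModel (varsSet Γ ∪ δ.vars), (∀ γ ∈ Γ, interp M γ = 1) → interp M δ = 1

/-- `Γ ⊨^cons_FP δ`: `Γ ⊨_FP δ` and `Γ ⊭_FP ⊥`. -/
def ConsEntails (Γ : Finset FP) (δ : FP) : Prop :=
  EntailsFin Γ δ ∧ SetSatisfiable Γ

/-- The set of permitted values `V_Pr(Pr(φ)◇c̄)`. -/
def permittedValues (φ : CPL) (d : Ineq) (c : ℚ) : Set ℝ :=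
  {x | ∃ (V : Finset ℕ) (M : ProbModel V), φ.vars ⊆ V ∧
      interp M (probIneq φ d c) = 1 ∧ M.μ (truthSet V φ) = x}

end FP

/-- Formulas of the Łukasiewicz language `L^Q_Ł`, built from propositional variables
and truth-constant literals `p◇c̄` using ¬, △, ⊙, ⊕, →. -/
inductive Luk where
  | var : ℕ → Luk
  | ineq : ℕ → Ineq → ℚ → Luk
  | neg : Luk → Luk
  | delta : Luk → Luk
  | conj : Luk → Luk → Luk
  | disj : Luk → Luk → Luk
  | impl : Luk → Luk → Luk
deriving DecidableEq

/-- An Ł-valuation: a function `Var → [0,1]`. -/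
structure LukVal where
  v : ℕ → ℝ
  mem : ∀ p, v p ∈ Set.Icc (0 : ℝ) 1

/-- Extension of an Ł-valuation to all `L^Q_Ł`-formulas. -/
noncomputable def LukVal.eval (val : LukVal) : Luk → ℝ
  | .var p => val.v p
  | .ineq p d c => if d.holds (val.v p) (c : ℝ) then 1 else 0
  | .neg φ => 1 - val.eval φ
  | .delta φ => if val.eval φ = 1 then 1 else 0
  | .conj φ χ => max 0 (val.eval φ + val.eval χ - 1)
  | .disj φ χ => min 1 (val.eval φ + val.eval χ)
  | .impl φ χ => min 1 (1 - val.eval φ + val.eval χ)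

namespace Luk

/-- Well-formedness: all rational constants lie in `[0,1] ∩ ℚ`. -/
def WF : Luk → Prop
  | var _ => True
  | ineq _ _ c => 0 ≤ c ∧ c ≤ 1
  | neg φ => WF φ
  | delta φ => WF φ
  | conj φ χ => WF φ ∧ WF χ
  | disj φ χ => WF φ ∧ WF χ
  | impl φ χ => WF φ ∧ WF χ

/-- `Φ ⊨_Ł χ` for a finite set `Φ`. -/
def EntailsFin (Φ : Finset Luk) (χ : Luk) : Prop :=
  ∀ val : LukVal, (∀ φ ∈ Φ, val.eval φ = 1) → val.eval χ = 1

/-- `φ` is Ł-valid. -/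
def ValidL (φ : Luk) : Prop := ∀ val : LukVal, val.eval φ = 1

/-- A set of `L^Q_Ł`-formulas is Ł-satisfiable. -/
def SatisfiableSet (S : Set Luk) : Prop := ∃ val : LukVal, ∀ φ ∈ S, val.eval φ = 1

/-- The probabilistic counterpart `φ^Pr` of a Łukasiewicz formula. -/
def toFP : Luk → FP
  | var p => .prob (.var p)
  | ineq p d c => .probIneq (.var p) d c
  | neg φ => .neg (toFP φ)
  | delta φ => .delta (toFP φ)
  | conj φ χ => .conj (toFP φ) (toFP χ)
  | disj φ χ => .disj (toFP φ) (toFP χ)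
  | impl φ χ => .impl (toFP φ) (toFP χ)

end Luk

namespace FP

/-- The outer counterpart `α^↑` of an `L^Q_Pr`-formula, replacing each atom `Pr(φ)`
by the fresh variable `e φ` (and `Pr(φ)◇c̄` by `(e φ)◇c̄`). -/
def outer (e : CPL → ℕ) : FP → Luk
  | prob φ => .var (e φ)
  | probIneq φ d c => .ineq (e φ) d c
  | neg α => .neg (outer e α)
  | delta α => .delta (outer e α)
  | conj α β => .conj (outer e α) (outer e β)
  | disj α β => .disj (outer e α) (outer e β)
  | impl α β => .impl (outer e α) (outer e β)

end FP

/-- The ⊙-conjunction of a (nonempty) list of `L^Q_Pr`-formulas. -/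
def bigConjFP : List FP → FP
  | [] => .probIneq (.var 0) .ge 0
  | a :: t => t.foldl .conj a

/-- The ∨-disjunction of a (nonempty) list of classical formulas. -/
def bigDisjCPL : List CPL → CPL
  | [] => .var 0
  | a :: t => t.foldl .or a

/-- The PIT `⊙_i Pr(τ_i)≤c̄_i ⊙ ⊙_i Pr(τ_i)≥c̄_i` associated with the list of
pairs `(τ_i, c_i)`. -/
def completePITFormula (L : List (CPL × ℚ)) : FP :=
  bigConjFP (L.map (fun t => FP.probIneq t.1 .le t.2) ++
             L.map (fun t => FP.probIneq t.1 .ge t.2))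

/-- `τ` is an `L_CPL`-term containing, for every `p ∈ V`, exactly one of the
literals `p` and `¬p` (and no other variables). -/
def IsCompleteTermOver (V : Finset ℕ) (τ : CPL) : Prop :=
  CPL.IsTerm τ ∧ τ.vars ⊆ V ∧ ∀ p ∈ V, (p ∈ τ.posVars ↔ p ∉ τ.negVars)

/-- Membership in `𝒱 = {0, 1/n, …, (n−1)/n, 1}`. -/
def memVSet (n : ℕ) (c : ℚ) : Prop := ∃ k : ℕ, k ≤ n ∧ c = (k : ℚ) / (n : ℚ)

/-- The data `(τ_i, c_i)` of a `⟨V,𝒱⟩`-complete PIT (with `𝒱` given by `n`). -/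
def IsCompletePIT (V : Finset ℕ) (n : ℕ) (L : List (CPL × ℚ)) : Prop :=
  (L.map Prod.fst).Nodup ∧
  (∀ t ∈ L, IsCompleteTermOver V t.1 ∧ memVSet n t.2) ∧
  (L.map Prod.snd).sum = 1

/-- A measure is coherent with a value assignment `pr` on the events `E`. -/
def coherent {V : Finset ℕ} (M : ProbModel V) (E : Finset CPL) (pr : CPL → ℚ) : Prop :=
  ∀ ψ ∈ E, M.μ (truthSet V ψ) = (pr ψ : ℝ)

/-- Conditional probability `Pr_μ(φ | χ) = μ(‖φ∧χ‖)/μ(‖χ‖)`. -/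
noncomputable def condProb {V : Finset ℕ} (M : ProbModel V) (φ χ : CPL) : ℝ :=
  M.μ (truthSet V (CPL.and φ χ)) / M.μ (truthSet V χ)

/-- `τ` is a solution to the PrAP `⟨{φ}, χ, H, E, pr⟩`: an `L_CPL`-term composed of
literals from `H` s.t. `φ, τ ⊨_CPL χ` and some probabilistic model coherent with `pr`
gives `μ(‖φ∧τ‖) > 0`. -/
def IsPrAPSolution (φ χ : CPL) (H E : Finset CPL) (pr : CPL → ℚ) (τ : CPL) : Prop :=
  CPL.IsTerm τ ∧ τ.lits ⊆ H ∧
  (∀ v, CPL.eval v φ = true → CPL.eval v τ = true → CPL.eval v χ = true) ∧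
  ∃ M : ProbModel (φ.vars ∪ χ.vars),
    coherent M E pr ∧ 0 < M.μ (truthSet (φ.vars ∪ χ.vars) (CPL.and φ τ))

/-- `τ` is a preferred solution: a solution s.t. for every other solution `σ` there is
a probabilistic model coherent with `pr` with `μ(‖τ‖) ≥ μ(‖σ‖)`. -/
def IsPreferredPrAPSolution (φ χ : CPL) (H E : Finset CPL) (pr : CPL → ℚ) (τ : CPL) : Prop :=
  IsPrAPSolution φ χ H E pr τ ∧
  ∀ σ, IsPrAPSolution φ χ H E pr σ → σ ≠ τ →
    ∃ M : ProbModel (φ.vars ∪ χ.vars),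
      coherent M E pr ∧
      M.μ (truthSet (φ.vars ∪ χ.vars) σ) ≤ M.μ (truthSet (φ.vars ∪ χ.vars) τ)

/-- The FP-counterpart `Ξ_p = {Pr(ψ)≈c̄ : ψ ∈ E, p(ψ) = c}` of a value assignment,
where `Pr(ψ)≈c̄` abbreviates `(Pr(ψ)≥c̄) ⊙ (Pr(ψ)≤c̄)`. -/
def XiP (E : Finset CPL) (pr : CPL → ℚ) : Finset FP :=
  E.image (fun ψ => FP.conj (FP.probIneq ψ .ge (pr ψ)) (FP.probIneq ψ .le (pr ψ)))

/-- The next weakest PIL `λ^♭_𝒱` of the PIL `Pr(τ)◇(k/n)`. -/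
def flatPIL (n : ℕ) (τ : CPL) (d : Ineq) (k : ℕ) : FP :=
  match d with
  | .ge => FP.probIneq τ .gt (((k : ℚ) - 1) / (n : ℚ))
  | .gt => FP.probIneq τ .ge ((k : ℚ) / (n : ℚ))
  | .le => FP.probIneq τ .lt (((k : ℚ) + 1) / (n : ℚ))
  | .lt => FP.probIneq τ .le ((k : ℚ) / (n : ℚ))

/-- The theory `Ψ_Γ = Γ^↑ ∪ {p_φ → p_χ : φ, χ ∈ E[Γ], φ ⊨_CPL χ}`. -/
def PsiGamma (Γ : Finset FP) (e : CPL → ℕ) : Set Luk :=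
  (fun α => FP.outer e α) '' (↑Γ : Set FP) ∪
  {ψ | ∃ φ ∈ Γ.sup FP.events, ∃ χ ∈ Γ.sup FP.events,
        CPL.Entails φ χ ∧ ψ = Luk.impl (.var (e φ)) (.var (e χ))}

/-- The conjunction `hd ∧ ⋀_{q ∈ s} q`. -/
def conjVarsFrom (hd : CPL) (s : Finset ℕ) : CPL :=
  (s.sort (· ≤ ·)).foldl (fun acc q => CPL.and acc (CPL.var q)) hd
section Aux

lemma CPL.eval_congr {v w : ℕ → Bool} : ∀ (φ : CPL), (∀ p ∈ φ.vars, v p = w p) →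
    CPL.eval v φ = CPL.eval w φ
  | .var p, h => h p (by simp [CPL.vars])
  | .neg φ, h => by
      simp only [CPL.eval, CPL.eval_congr φ (fun p hp => h p (by simpa [CPL.vars] using hp))]
  | .and φ χ, h => by
      simp only [CPL.eval,
        CPL.eval_congr φ (fun p hp => h p (by simp [CPL.vars]; exact Or.inl hp)),
        CPL.eval_congr χ (fun p hp => h p (by simp [CPL.vars]; exact Or.inr hp))]
  | .or φ χ, h => by
      simp only [CPL.eval,
        CPL.eval_congr φ (fun p hp => h p (by simp [CPL.vars]; exact Or.inl hp)),
        CPL.eval_congr χ (fun p hp => h p (by simp [CPL.vars]; exact Or.inr hp))]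

lemma ProbModel.mono {V : Finset ℕ} (M : ProbModel V) {A B : Set (World V)} (h : A ⊆ B) :
    M.μ A ≤ M.μ B := by
  have hd : Disjoint A (B \ A) := Set.disjoint_sdiff_right
  have := M.m_add A (B \ A) hd
  rw [Set.union_diff_cancel h] at this
  have := M.nonneg (B \ A)
  linarith

lemma ProbModel.subadd {V : Finset ℕ} (M : ProbModel V) (A B : Set (World V)) :
    M.μ (A ∪ B) ≤ M.μ A + M.μ B := by
  have hd : Disjoint A (B \ A) := Set.disjoint_sdiff_right
  have h1 : A ∪ B = A ∪ (B \ A) := by simp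
  rw [h1, M.m_add A (B \ A) hd]
  have := M.mono (Set.diff_subset (s := B) (t := A))
  linarith

lemma FP.interp_mem {V : Finset ℕ} (M : ProbModel V) :
    ∀ α : FP, 0 ≤ FP.interp M α ∧ FP.interp M α ≤ 1
  | .prob φ => ⟨M.nonneg _, M.le_one _⟩
  | .probIneq φ d c => by unfold FP.interp; split <;> norm_num
  | .neg α => by have := FP.interp_mem M α; unfold FP.interp; constructor <;> linarith [this.1, this.2]
  | .delta α => by unfold FP.interp; split <;> norm_num
  | .conj α β => by
      have ha := FP.interp_mem M α; have hb := FP.interp_mem M β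
      unfold FP.interp
      constructor
      · exact le_max_left _ _
      · simp only [max_le_iff]; constructor <;> [norm_num; linarith [ha.2, hb.2]]
  | .disj α β => by
      have ha := FP.interp_mem M α; have hb := FP.interp_mem M β
      unfold FP.interp
      constructor
      · exact le_min (by norm_num) (by linarith [ha.1, hb.1])
      · exact min_le_left _ _
  | .impl α β => by
      have ha := FP.interp_mem M α; have hb := FP.interp_mem M β
      unfold FP.interp
      constructor
      · exact le_min (by norm_num) (by linarith [ha.2, hb.1])
      · exact min_le_left _ _

lemma FP.interp_conj_eq_one {V : Finset ℕ} (M : ProbModel V) (a b : FP) :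
    FP.interp M (.conj a b) = 1 ↔ FP.interp M a = 1 ∧ FP.interp M b = 1 := by
  have ha := FP.interp_mem M a; have hb := FP.interp_mem M b
  show max 0 (FP.interp M a + FP.interp M b - 1) = 1 ↔ _
  constructor
  · intro h
    rcases max_cases 0 (FP.interp M a + FP.interp M b - 1) with ⟨h1, _⟩ | ⟨h1, _⟩ <;>
      rw [h1] at h
    · norm_num at h
    · constructor <;> linarith [ha.2, hb.2]
  · rintro ⟨h1, h2⟩; rw [h1, h2]; norm_num

lemma FP.interp_foldl {V : Finset ℕ} (M : ProbModel V) :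
    ∀ (t : List FP) (a : FP),
      FP.interp M (t.foldl .conj a) = 1 ↔ FP.interp M a = 1 ∧ ∀ b ∈ t, FP.interp M b = 1
  | [], a => by simp
  | b :: t, a => by
      simp only [List.foldl_cons, FP.interp_foldl M t (.conj a b), FP.interp_conj_eq_one,
        List.mem_cons]
      constructor
      · rintro ⟨⟨h1, h2⟩, h3⟩
        exact ⟨h1, fun c hc => hc.elim (fun h => h ▸ h2) (h3 c)⟩
      · rintro ⟨h1, h2⟩
        exact ⟨⟨h1, h2 b (Or.inl rfl)⟩, fun c hc => h2 c (Or.inr hc)⟩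

lemma FP.vars_foldl : ∀ (t : List FP) (a b : FP), (b = a ∨ b ∈ t) →
    b.vars ⊆ (t.foldl .conj a).vars
  | [], a, b, h => by
      rcases h with rfl | h
      · simp
      · exact (List.not_mem_nil h).elim
  | c :: t, a, b, h => by
      simp only [List.foldl_cons]
      rcases h with rfl | h
      · exact Finset.Subset.trans (show b.vars ⊆ (FP.conj b c).vars by simp [FP.vars])
          (FP.vars_foldl t (.conj b c) (.conj b c) (Or.inl rfl))
      · rcases List.mem_cons.mp h with rfl | h
        · exact Finset.Subset.trans (show b.vars ⊆ (FP.conj a b).vars by simp [FP.vars])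
            (FP.vars_foldl t (.conj a b) (.conj a b) (Or.inl rfl))
        · exact FP.vars_foldl t (.conj a c) b (Or.inr h)

lemma CPL.eval_foldl_or (v : ℕ → Bool) :
    ∀ (t : List CPL) (a : CPL),
      CPL.eval v (t.foldl .or a) = (CPL.eval v a || t.any (CPL.eval v))
  | [], a => by simp
  | b :: t, a => by
      simp only [List.foldl_cons, CPL.eval_foldl_or v t (.or a b), List.any_cons]
      show (CPL.eval v a || CPL.eval v b || _) = _
      cases CPL.eval v a <;> cases CPL.eval v b <;> simp

end Aux

/-- For `φ = ⋁_i ⋀_j l^i_j` in DNF, the PIT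
`ζ_φ = ⊙_i (Pr(⋀_j l^i_j) ≤ 0̄)` is FP-satisfiable iff `φ` is not CPL-valid. -/
theorem stmt9 (L : List CPL) (hL : L ≠ []) (hterm : ∀ τ ∈ L, CPL.IsTerm τ) :
    FP.Satisfiable (bigConjFP (L.map (fun τ => FP.probIneq τ .le 0))) ↔
      ¬ CPL.Valid (bigDisjCPL L) := by
  obtain ⟨a, t, rfl⟩ := List.exists_cons_of_ne_nil hL
  set f : CPL → FP := fun τ => FP.probIneq τ .le 0 with hf
  have hbig : bigConjFP ((a :: t).map f) = (t.map f).foldl .conj (f a) := rfl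
  set V := (bigConjFP ((a :: t).map f)).vars with hV
  have hVsub : ∀ τ ∈ a :: t, τ.vars ⊆ V := by
    intro τ hτ
    have h2 : (f τ).vars ⊆ V := by
      rw [hV, hbig]
      rcases List.mem_cons.mp hτ with rfl | h
      · exact FP.vars_foldl _ _ _ (Or.inl rfl)
      · exact FP.vars_foldl _ _ _ (Or.inr (List.mem_map_of_mem (f := f) h))
    simpa [hf, FP.vars] using h2
  have hdisj : ∀ v : ℕ → Bool, CPL.eval v (bigDisjCPL (a :: t)) =
      (CPL.eval v a || t.any (CPL.eval v)) := fun v => CPL.eval_foldl_or v t a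
  constructor
  · rintro ⟨M, hM⟩ hvalid
    replace hM : FP.interp M ((t.map f).foldl .conj (f a)) = 1 := hM
    rw [FP.interp_foldl] at hM
    have hzero : ∀ τ ∈ a :: t, M.μ (truthSet V τ) = 0 := by
      intro τ hτ
      have h1 : FP.interp M (f τ) = 1 := by
        rcases List.mem_cons.mp hτ with rfl | h
        · exact hM.1
        · exact hM.2 _ (List.mem_map_of_mem (f := f) h)
      have hle : M.μ (truthSet V τ) ≤ ((0 : ℚ) : ℝ) := by
        by_contra hc
        simp only [hf, FP.interp, Ineq.holds, if_neg hc] at h1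
        norm_num at h1
        exact hc (by exact_mod_cast h1)
      have := M.nonneg (truthSet V τ)
      push_cast at hle
      linarith
    have key : ∀ l : List CPL, (∀ τ ∈ l, M.μ (truthSet V τ) = 0) →
        M.μ {w : World V | ∃ τ ∈ l, CPL.evalSet w.1 τ = true} ≤ 0 := by
      intro l
      induction l with
      | nil =>
          intro _
          have he : {w : World V | ∃ τ ∈ ([] : List CPL), CPL.evalSet w.1 τ = true} = ∅ := by
            simp
          rw [he, M.m_empty]
      | cons b l ih =>
          intro hl
          have hsplit : {w : World V | ∃ τ ∈ b :: l, CPL.evalSet w.1 τ = true} =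
              truthSet V b ∪ {w : World V | ∃ τ ∈ l, CPL.evalSet w.1 τ = true} := by
            ext w
            simp [truthSet, List.mem_cons, or_and_right, exists_or]
          rw [hsplit]
          have h1 := M.subadd (truthSet V b)
            {w : World V | ∃ τ ∈ l, CPL.evalSet w.1 τ = true}
          have h2 := ih (fun τ hτ => hl τ (List.mem_cons_of_mem b hτ))
          have h3 := hl b List.mem_cons_self
          linarith
    have huniv : (Set.univ : Set (World V)) ⊆
        {w : World V | ∃ τ ∈ a :: t, CPL.evalSet w.1 τ = true} := by
      intro w _
      have hv := hvalid (fun p => decide (p ∈ w.1))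
      rw [hdisj] at hv
      rcases Bool.or_eq_true_iff.mp hv with h | h
      · exact ⟨a, List.mem_cons_self, h⟩
      · obtain ⟨b, hb, hb2⟩ := List.any_eq_true.mp h
        exact ⟨b, List.mem_cons_of_mem a hb, hb2⟩
    have := M.mono huniv
    rw [M.m_univ] at this
    have := key (a :: t) hzero
    linarith
  · intro h
    have hex : ∃ v, CPL.eval v (bigDisjCPL (a :: t)) = false := by
      simp only [CPL.Valid, not_forall] at h
      obtain ⟨v, hv⟩ := h
      exact ⟨v, by simpa using hv⟩
    obtain ⟨v, hv⟩ := hex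
    rw [hdisj] at hv
    have hva : CPL.eval v a = false := by
      cases hea : CPL.eval v a <;> simp [hea] at hv ⊢
    have hvt : ∀ b ∈ t, CPL.eval v b = false := by
      intro b hb
      cases heb : CPL.eval v b with
      | false => rfl
      | true =>
          rw [Bool.or_eq_false_iff] at hv
          have := List.any_eq_false.mp hv.2 b hb
          simp [heb] at this
    have hvall : ∀ τ ∈ a :: t, CPL.eval v τ = false := by
      intro τ hτ
      rcases List.mem_cons.mp hτ with rfl | hτ
      · exact hva
      · exact hvt τ hτ
    set X : Finset ℕ := V.filter (fun p => v p = true) with hX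
    have hXsub : X ⊆ V := Finset.filter_subset _ _
    set w : World V := ⟨X, hXsub⟩ with hw
    refine ⟨⟨fun A => if w ∈ A then (1:ℝ) else 0, ?_, ?_, ?_, ?_, ?_⟩, ?_⟩
    · intro A; split <;> norm_num
    · intro A; split <;> norm_num
    · exact if_pos (Set.mem_univ w)
    · exact if_neg (Set.notMem_empty w)
    · intro A B hAB
      by_cases hA : w ∈ A
      · have hB : w ∉ B := fun hB => Set.disjoint_left.mp hAB hA hB
        simp [Set.mem_union, hA, hB]
      · by_cases hB : w ∈ B <;> simp [Set.mem_union, hA, hB]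
    have hpil : ∀ (M : ProbModel V) (τ : CPL), M.μ (truthSet V τ) = 0 →
        FP.interp M (f τ) = 1 := by
      intro M τ hμ
      simp only [hf, FP.interp, Ineq.holds]
      simp [hμ]
    have hwmem : ∀ τ ∈ a :: t, w ∉ truthSet V τ := by
      intro τ hτ
      have hcongr : CPL.eval (fun p => decide (p ∈ X)) τ = CPL.eval v τ := by
        apply CPL.eval_congr
        intro p hp
        have hpV : p ∈ V := hVsub τ hτ hp
        cases hvp : v p <;> simp [hX, Finset.mem_filter, hvp, hpV]
      simp [truthSet, hw, CPL.evalSet, hcongr, hvall τ hτ]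
    show FP.interp _ ((t.map f).foldl .conj (f a)) = 1
    rw [FP.interp_foldl]
    constructor
    · exact hpil _ a (if_neg (hwmem a List.mem_cons_self))
    · intro b hb
      obtain ⟨τ, hτ, rfl⟩ := List.mem_map.mp hb
      exact hpil _ τ (if_neg (hwmem τ (List.mem_cons_of_mem a hτ)))
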